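/- The map j : ℍ² → M₂(ℝ), j(x+iy) = [[x/y, −(x²+y²)/y],[1/y, −x/y]], is equivariant with respect to Möbius transformations and conjugation: for every P = [[a,b],[c,d]] ∈ SL(2,ℝ) and every z ∈ ℂ with Im z > 0, j((az+b)/(cz+d)) = P · j(z) · P⁻¹. Consequently, for every traceless X ∈ 𝔰𝔩(2,ℝ), tr(j(P·z)·X) = tr(j(z)·P⁻¹XP), which is the equivariance of the moment map μ of the SL(2,ℝ)-action with respect to the coadjoint action. -/

import Mathlib

open Matrix

/-- The map `j : ℍ² → M₂(ℝ)`, `j(x+iy) = [[x/y, −(x²+y²)/y], [1/y, −x/y]]`. -/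
noncomputable def jmat (z : ℂ) : Matrix (Fin 2) (Fin 2) ℝ :=
  !![z.re / z.im, -(z.re ^ 2 + z.im ^ 2) / z.im;
     1 / z.im, -z.re / z.im]

/-- `j` is equivariant with respect to Möbius transformations and conjugation;
consequently `tr(j(P·z)·X) = tr(j(z)·P⁻¹XP)` for traceless `X`, which is the
equivariance of the moment map of the `SL(2,ℝ)`-action for the coadjoint action. -/
theorem stmt10 (a b c d : ℝ) (h : a * d - b * c = 1) :
    ∀ z : ℂ, 0 < z.im →
      jmat (((a : ℂ) * z + b) / ((c : ℂ) * z + d)) =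
        !![a, b; c, d] * jmat z * (!![a, b; c, d])⁻¹ ∧
      ∀ X : Matrix (Fin 2) (Fin 2) ℝ, X.trace = 0 →
        (jmat (((a : ℂ) * z + b) / ((c : ℂ) * z + d)) * X).trace =
          (jmat z * ((!![a, b; c, d])⁻¹ * X * !![a, b; c, d])).trace := by
  intro z hy
  have hD : 0 < (c * z.re + d) ^ 2 + (c * z.im) ^ 2 := by
    rcases eq_or_ne c 0 with hc | hc
    · have hd : d ≠ 0 := by rintro rfl; simp [hc] at h
      simp only [hc, zero_mul, zero_add]
      positivity
    · have h5 : 0 < (c * z.im) ^ 2 := by positivity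
      nlinarith [sq_nonneg (c * z.re + d)]
  have hinv : (!![a, b; c, d])⁻¹ = !![d, -b; -c, a] := by
    apply inv_eq_right_inv
    ext i j
    fin_cases i <;> fin_cases j <;>
      simp [Matrix.mul_apply, Fin.sum_univ_two] <;> linarith
  have h1 : ((a : ℂ) * z + b).re = a * z.re + b := by simp
  have h2 : ((a : ℂ) * z + b).im = a * z.im := by simp
  have h3 : ((c : ℂ) * z + d).re = c * z.re + d := by simp
  have h4 : ((c : ℂ) * z + d).im = c * z.im := by simp
  have key : (c * z.re + d) * (c * z.re + d) + c * z.im * (c * z.im) ≠ 0 := by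
    intro hk; exact hD.ne' (by linear_combination hk)
  have hw_re : (((a : ℂ) * z + b) / ((c : ℂ) * z + d)).re =
      (a * c * (z.re ^ 2 + z.im ^ 2) + (a * d + b * c) * z.re + b * d) /
        ((c * z.re + d) ^ 2 + (c * z.im) ^ 2) := by
    rw [Complex.div_re, Complex.normSq_apply, h1, h2, h3, h4, ← add_div,
      div_eq_div_iff key hD.ne']
    ring
  have hw_im : (((a : ℂ) * z + b) / ((c : ℂ) * z + d)).im =
      z.im / ((c * z.re + d) ^ 2 + (c * z.im) ^ 2) := by
    rw [Complex.div_im, Complex.normSq_apply, h1, h2, h3, h4, div_sub_div_same,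
      div_eq_div_iff key hD.ne']
    linear_combination z.im * ((c * z.re + d) ^ 2 + (c * z.im) ^ 2) * h
  have hnorm : (((a : ℂ) * z + b) / ((c : ℂ) * z + d)).re ^ 2 +
      (((a : ℂ) * z + b) / ((c : ℂ) * z + d)).im ^ 2 =
      ((a * z.re + b) ^ 2 + (a * z.im) ^ 2) /
        ((c * z.re + d) ^ 2 + (c * z.im) ^ 2) := by
    have e1 : ∀ w : ℂ, w.re ^ 2 + w.im ^ 2 = Complex.normSq w := by
      intro w; rw [Complex.normSq_apply]; ring
    rw [e1, map_div₀, Complex.normSq_apply, Complex.normSq_apply, h1, h2, h3, h4]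
    ring
  have hjw : jmat (((a : ℂ) * z + b) / ((c : ℂ) * z + d)) =
      !![(a * c * (z.re ^ 2 + z.im ^ 2) + (a * d + b * c) * z.re + b * d) / z.im,
         -((a * z.re + b) ^ 2 + (a * z.im) ^ 2) / z.im;
         ((c * z.re + d) ^ 2 + (c * z.im) ^ 2) / z.im,
         -(a * c * (z.re ^ 2 + z.im ^ 2) + (a * d + b * c) * z.re + b * d) / z.im] := by
    unfold jmat
    rw [hnorm, hw_re, hw_im]
    have hD0 : (c * z.re + d) ^ 2 + c ^ 2 * z.im ^ 2 ≠ 0 := (by nlinarith [hD] : (0:ℝ) < _).ne'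
    have hD1 : (z.re * c + d) ^ 2 + z.im ^ 2 * c ^ 2 ≠ 0 := (by nlinarith [hD] : (0:ℝ) < _).ne'
    ext i j
    fin_cases i <;> fin_cases j <;>
      · simp only [Fin.zero_eta, Fin.mk_one, Matrix.cons_val', Matrix.cons_val_zero,
          Matrix.cons_val_one, Matrix.head_cons, Matrix.empty_val', Matrix.cons_val_fin_one,
          Matrix.head_fin_const, Matrix.of_apply, Fin.isValue]
        field_simp
  have hmain : jmat (((a : ℂ) * z + b) / ((c : ℂ) * z + d)) =
      !![a, b; c, d] * jmat z * (!![a, b; c, d])⁻¹ := by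
    rw [hinv, hjw]
    ext i j
    fin_cases i <;> fin_cases j <;>
      · simp [jmat, Matrix.mul_apply, Fin.sum_univ_two]
        field_simp
        ring
  refine ⟨hmain, fun X _ => ?_⟩
  rw [hmain]
  rw [show !![a, b; c, d] * jmat z * (!![a, b; c, d])⁻¹ * X
      = !![a, b; c, d] * (jmat z * ((!![a, b; c, d])⁻¹ * X)) by
    noncomm_ring]
  rw [Matrix.trace_mul_comm, ← Matrix.mul_assoc, ← Matrix.mul_assoc, Matrix.mul_assoc (jmat z)]
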